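/- Let d, N be natural numbers with 1 ≤ N ≤ d−1, let w ∈ [0,1], and let a ∈ ℝ^d be decreasing with 0 ≤ a_i ≤ 1 for all i and ∑_{i=1}^d a_i = N. Let v^HF ∈ ℝ^d be the vector whose first N entries are 1 and whose remaining entries are 0, let P_a be the permutohedron generated by a, and let P_HF be the permutohedron generated by v^HF. Then { λ ∈ ℝ^d : ∑_{i=1}^d λ_i = N and for every k with 1 ≤ k ≤ d−1 the sum of the k largest entries of λ is at most Ω(w,k,N,a) } = Σ(w) ∩ ( w·P_a + (1−w)·P_HF ), where Σ(w) = { λ ∈ ℝ^d : ∑_{i=1}^d λ_i = N, the sum of the k largest entries of λ is at most k for 1 ≤ k ≤ N−1, at most N−1+w for k = N, and at most N for N+1 ≤ k ≤ d−1 }, w·P_a denotes the scalar dilation of the set P_a, and the sum of sets is the Minkowski sum. -/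

import Mathlib

open scoped Pointwise

/-- The sum of the first `k` entries of `x : Fin d → ℝ` (entries with index `< k`). -/
noncomputable def partialSum {d : ℕ} (k : ℕ) (x : Fin d → ℝ) : ℝ :=
  ∑ i ∈ Finset.univ.filter (fun i : Fin d => (i : ℕ) < k), x i

/-- `Ω(w,k,N,a)`: the upper bound on the sum of the `k` largest natural occupation
numbers from Eq. (sum-r2-ub). -/
noncomputable def Omega (d N k : ℕ) (w : ℝ) (a : Fin d → ℝ) : ℝ :=
  if k = N then
    min ((N : ℝ) - 1 + w) (w * partialSum N a + (1 - w) * (N : ℝ))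
  else
    w * partialSum k a + (1 - w) * min (k : ℝ) (N : ℝ)

/-- The sum of the `k` largest entries of `x : Fin d → ℝ`: the supremum over all
`k`-element index sets of the sum of the corresponding entries. -/
noncomputable def sumKLargest {d : ℕ} (k : ℕ) (x : Fin d → ℝ) : ℝ :=
  sSup { y : ℝ | ∃ s : Finset (Fin d), s.card = k ∧ y = ∑ i ∈ s, x i }

/-- The permutohedron generated by `v`: the convex hull of all entry-permutations
of `v`. -/
noncomputable def permutohedron {d : ℕ} (v : Fin d → ℝ) : Set (Fin d → ℝ) :=
  convexHull ℝ { x : Fin d → ℝ | ∃ σ : Equiv.Perm (Fin d), x = v ∘ σ }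

namespace SpectralAux


variable {d : ℕ}

lemma sumSet_finite (k : ℕ) (x : Fin d → ℝ) :
    { y : ℝ | ∃ s : Finset (Fin d), s.card = k ∧ y = ∑ i ∈ s, x i }.Finite :=
  (Set.finite_range (fun s : Finset (Fin d) => ∑ i ∈ s, x i)).subset
    (by rintro y ⟨s, -, rfl⟩; exact ⟨s, rfl⟩)

lemma sumSet_nonempty {k : ℕ} (hk : k ≤ d) (x : Fin d → ℝ) :
    { y : ℝ | ∃ s : Finset (Fin d), s.card = k ∧ y = ∑ i ∈ s, x i }.Nonempty := by
  obtain ⟨s, -, hs⟩ := Finset.exists_subset_card_eq (s := (Finset.univ : Finset (Fin d))) (n := k)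
    (by simpa using hk)
  exact ⟨∑ i ∈ s, x i, s, hs, rfl⟩

lemma le_sumKLargest {k : ℕ} (x : Fin d → ℝ) {s : Finset (Fin d)} (hs : s.card = k) :
    ∑ i ∈ s, x i ≤ sumKLargest k x :=
  le_csSup (sumSet_finite k x).bddAbove ⟨s, hs, rfl⟩

lemma sumKLargest_le {k : ℕ} (hk : k ≤ d) (x : Fin d → ℝ) {C : ℝ}
    (h : ∀ s : Finset (Fin d), s.card = k → ∑ i ∈ s, x i ≤ C) :
    sumKLargest k x ≤ C :=
  csSup_le (sumSet_nonempty hk x) (by rintro y ⟨s, hs, rfl⟩; exact h s hs)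

lemma sumKLargest_comp_perm (k : ℕ) (x : Fin d → ℝ) (σ : Equiv.Perm (Fin d)) :
    sumKLargest k (x ∘ σ) = sumKLargest k x := by
  unfold sumKLargest
  congr 1
  ext y
  constructor
  · rintro ⟨s, hs, rfl⟩
    refine ⟨s.image σ, by rw [Finset.card_image_of_injective _ σ.injective, hs], ?_⟩
    rw [Finset.sum_image (fun a _ b _ h => σ.injective h)]
    rfl
  · rintro ⟨s, hs, rfl⟩
    refine ⟨s.image σ.symm, by rw [Finset.card_image_of_injective _ σ.symm.injective, hs], ?_⟩
    rw [Finset.sum_image (fun a _ b _ h => σ.symm.injective h)]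
    simp [Function.comp]

lemma filter_lt_eq_image {k : ℕ} (hk : k ≤ d) :
    Finset.univ.filter (fun i : Fin d => (i : ℕ) < k) =
      Finset.image (Fin.castLE hk) Finset.univ := by
  ext i
  simp only [Finset.mem_filter, Finset.mem_univ, true_and, Finset.mem_image]
  constructor
  · intro hi; exact ⟨⟨(i : ℕ), hi⟩, rfl⟩
  · rintro ⟨j, rfl⟩; exact j.isLt

lemma partialSum_eq {k : ℕ} (hk : k ≤ d) (x : Fin d → ℝ) :
    partialSum k x = ∑ j : Fin k, x (Fin.castLE hk j) := by
  unfold partialSum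
  rw [filter_lt_eq_image hk,
    Finset.sum_image (fun a _ b _ h => Fin.castLE_injective hk h)]

lemma filter_lt_card {k : ℕ} (hk : k ≤ d) :
    (Finset.univ.filter (fun i : Fin d => (i : ℕ) < k)).card = k := by
  rw [filter_lt_eq_image hk, Finset.card_image_of_injective _ (Fin.castLE_injective hk),
    Finset.card_univ, Fintype.card_fin]

lemma partialSum_self (x : Fin d → ℝ) : partialSum d x = ∑ i, x i := by
  unfold partialSum
  rw [Finset.filter_true_of_mem (fun i _ => i.isLt)]

lemma le_strictMono {k : ℕ} {f : Fin k → Fin d} (hf : StrictMono f) :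
    ∀ n (hn : n < k), n ≤ ((f ⟨n, hn⟩ : Fin d) : ℕ) := by
  intro n
  induction n with
  | zero => intro hn; exact Nat.zero_le _
  | succ m ih =>
    intro hn
    have hm : m < k := by omega
    have h1 : ((f ⟨m, hm⟩ : Fin d) : ℕ) < ((f ⟨m + 1, hn⟩ : Fin d) : ℕ) :=
      hf (by simp [Fin.lt_def])
    have h2 := ih hm
    omega

lemma sumKLargest_eq_partialSum {k : ℕ} (hk : k ≤ d) {v : Fin d → ℝ} (hv : Antitone v) :
    sumKLargest k v = partialSum k v := by
  apply le_antisymm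
  · apply sumKLargest_le hk
    intro s hs
    have e1 : ∑ j : Fin k, v ((s.orderEmbOfFin hs) j) = ∑ i ∈ s, v i := by
      rw [← Finset.sum_coe_sort s (fun i => v i)]
      exact Equiv.sum_comp (s.orderIsoOfFin hs).toEquiv (fun i => v (i : Fin d))
    rw [partialSum_eq hk, ← e1]
    apply Finset.sum_le_sum
    intro j _
    apply hv
    have := le_strictMono (s.orderEmbOfFin hs).strictMono (j : ℕ) j.isLt
    simpa [Fin.le_def] using this
  · show partialSum k v ≤ _
    unfold partialSum
    exact le_sumKLargest v (filter_lt_card hk)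



lemma mem_perm_bounds {v : Fin d → ℝ} (hv : Antitone v) {x : Fin d → ℝ}
    (hx : x ∈ permutohedron v) :
    (∑ i, x i = ∑ i, v i) ∧ ∀ k, k ≤ d → sumKLargest k x ≤ partialSum k v := by
  have hsub : permutohedron v ⊆
      { y : Fin d → ℝ | (∑ i, y i = ∑ i, v i) ∧
        ∀ k, k ≤ d → sumKLargest k y ≤ partialSum k v } := by
    apply convexHull_min
    · rintro y ⟨σ, rfl⟩
      constructor
      · exact Equiv.sum_comp σ v
      · intro k hk
        rw [sumKLargest_comp_perm, sumKLargest_eq_partialSum hk hv]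
    · rintro y ⟨hy1, hy2⟩ z ⟨hz1, hz2⟩ α β hα hβ hαβ
      constructor
      · have : ∑ i, (α • y + β • z) i = α * ∑ i, y i + β * ∑ i, z i := by
          simp [Finset.sum_add_distrib, Finset.mul_sum]
        rw [this, hy1, hz1]; linear_combination (∑ i : Fin d, v i) * hαβ
      · intro k hk
        apply sumKLargest_le hk
        intro s hs
        have h1 : ∑ i ∈ s, (α • y + β • z) i = α * ∑ i ∈ s, y i + β * ∑ i ∈ s, z i := by
          simp [Finset.sum_add_distrib, Finset.mul_sum]
        rw [h1]
        have h2 : ∑ i ∈ s, y i ≤ partialSum k v := (le_sumKLargest y hs).trans (hy2 k hk)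
        have h3 : ∑ i ∈ s, z i ≤ partialSum k v := (le_sumKLargest z hs).trans (hz2 k hk)
        linarith [mul_le_mul_of_nonneg_left h2 hα, mul_le_mul_of_nonneg_left h3 hβ,
          (by linear_combination (partialSum k v) * hαβ :
            α * partialSum k v + β * partialSum k v = partialSum k v)]
  exact hsub hx

lemma abel_ineq (f e : ℕ → ℝ) (hf : ∀ i, f (i + 1) ≤ f i) :
    ∀ n : ℕ, (∀ k, 1 ≤ k → k ≤ n → ∑ i ∈ Finset.range k, e i ≤ 0) →
      ∑ i ∈ Finset.range (n + 1), f i * e i ≤ f n * ∑ i ∈ Finset.range (n + 1), e i := by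
  intro n
  induction n with
  | zero => intro _; simp
  | succ m ih =>
    intro hyp
    have IH := ih (fun k hk1 hk2 => hyp k hk1 (by omega))
    have hG : ∑ i ∈ Finset.range (m + 1), e i ≤ 0 := hyp (m + 1) (by omega) le_rfl
    rw [Finset.sum_range_succ (fun i => f i * e i), Finset.sum_range_succ e]
    have h1 : f m * ∑ i ∈ Finset.range (m + 1), e i ≤
        f (m + 1) * ∑ i ∈ Finset.range (m + 1), e i :=
      mul_le_mul_of_nonpos_right (hf m) hG
    nlinarith



/-- sorting a tuple antitonely -/
lemma exists_antitone_sort (c : Fin d → ℝ) :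
    ∃ τ : Equiv.Perm (Fin d), Antitone (c ∘ τ) := by
  refine ⟨Tuple.sort (fun i => -(c i)), ?_⟩
  have h := Tuple.monotone_sort (fun i => -(c i))
  intro i j hij
  have := h hij
  simp only [Function.comp_apply] at this ⊢
  linarith [this]

lemma mem_permutohedron_of_maj (hd : 1 ≤ d) {v : Fin d → ℝ} (hv : Antitone v)
    (x : Fin d → ℝ) (hsum : ∑ i, x i = ∑ i, v i)
    (hbnd : ∀ k, 1 ≤ k → k ≤ d - 1 → sumKLargest k x ≤ partialSum k v) :
    x ∈ permutohedron v := by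
  by_contra hxP
  have hSfin : { y : Fin d → ℝ | ∃ σ : Equiv.Perm (Fin d), y = v ∘ σ }.Finite := by
    have : { y : Fin d → ℝ | ∃ σ : Equiv.Perm (Fin d), y = v ∘ σ } =
        Set.range (fun σ : Equiv.Perm (Fin d) => v ∘ σ) := by
      ext y; simp [Set.range, eq_comm]
    rw [this]; exact Set.finite_range _
  have hclosed : IsClosed (permutohedron v) := (hSfin.isCompact_convexHull (𝕜 := ℝ)).isClosed
  have hconv : Convex ℝ (permutohedron v) := convex_convexHull ℝ _
  obtain ⟨f, u, hfu, hux⟩ := geometric_hahn_banach_closed_point hconv hclosed hxP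
  set c : Fin d → ℝ := fun i => f (Pi.single i 1) with hc
  have hf_eq : ∀ y : Fin d → ℝ, f y = ∑ i, c i * y i := by
    intro y
    have hy : y = ∑ i, y i • (Pi.single i (1 : ℝ) : Fin d → ℝ) := by
      funext j
      rw [Finset.sum_apply]
      simp [Pi.single_apply]
    calc f y = f (∑ i, y i • (Pi.single i (1 : ℝ) : Fin d → ℝ)) := by rw [← hy]
      _ = ∑ i, y i • f (Pi.single i (1 : ℝ)) := by rw [map_sum]; simp
      _ = ∑ i, c i * y i := by simp [hc, mul_comm]
  obtain ⟨τ, hτ⟩ := exists_antitone_sort c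
  obtain ⟨ρ, hρ⟩ := exists_antitone_sort x
  set g : Fin d → ℝ := x ∘ ρ with hg
  -- partial sums of g are bounded by those of v
  have hgv : ∀ k, 1 ≤ k → k ≤ d - 1 → partialSum k g ≤ partialSum k v := by
    intro k hk1 hk2
    have hkd : k ≤ d := by omega
    rw [← sumKLargest_eq_partialSum hkd hρ, hg, sumKLargest_comp_perm]
    exact hbnd k hk1 hk2
  have hgsum : ∑ i, g i = ∑ i, v i := (Equiv.sum_comp ρ x).trans hsum
  -- Abel summation setup over ℕ
  have hd' : d - 1 < d := by omega
  set F : ℕ → ℝ := fun n => c (τ ⟨min n (d - 1), by omega⟩) with hF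
  set E : ℕ → ℝ := fun n => if h : n < d then g ⟨n, h⟩ - v ⟨n, h⟩ else 0 with hE
  have hFanti : ∀ i, F (i + 1) ≤ F i := by
    intro i
    exact hτ (by simp only [Fin.le_def]; omega)
  have hEpart : ∀ k (hk : k ≤ d),
      ∑ i ∈ Finset.range k, E i = partialSum k g - partialSum k v := by
    intro k hk
    rw [partialSum_eq hk, partialSum_eq hk, ← Finset.sum_sub_distrib,
      ← Fin.sum_univ_eq_sum_range E k]
    apply Finset.sum_congr rfl
    intro j _
    have hj : (j : ℕ) < d := lt_of_lt_of_le j.isLt hk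
    show E (j : ℕ) = g (Fin.castLE hk j) - v (Fin.castLE hk j)
    simp only [hE, dif_pos hj]
    rfl
  have hEneg : ∀ k, 1 ≤ k → k ≤ d - 1 → ∑ i ∈ Finset.range k, E i ≤ 0 := by
    intro k hk1 hk2
    rw [hEpart k (by omega)]
    linarith [hgv k hk1 hk2]
  have hEzero : ∑ i ∈ Finset.range d, E i = 0 := by
    rw [hEpart d le_rfl, partialSum_self, partialSum_self, hgsum]; ring
  obtain ⟨m, hm⟩ : ∃ m, d = m + 1 := ⟨d - 1, by omega⟩
  have habel : ∑ i ∈ Finset.range d, F i * E i ≤ 0 := by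
    rw [hm] at hEzero ⊢
    have := abel_ineq F E hFanti m (fun k hk1 hk2 => hEneg k hk1 (by omega))
    rw [hEzero] at this
    simpa using this
  -- convert back to Fin sums
  have hkey : ∑ j : Fin d, c (τ j) * g j ≤ ∑ j : Fin d, c (τ j) * v j := by
    have h1 : ∑ j : Fin d, (F (j : ℕ) * E (j : ℕ)) = ∑ i ∈ Finset.range d, F i * E i :=
      Fin.sum_univ_eq_sum_range (fun n => F n * E n) d
    have h2 : ∀ j : Fin d, F (j : ℕ) * E (j : ℕ) = c (τ j) * (g j - v j) := by
      intro j
      have hmin : (⟨min (j : ℕ) (d - 1), by omega⟩ : Fin d) = j := by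
        apply Fin.ext; simp; omega
      simp only [hF, hE, dif_pos j.isLt, hmin]
    have h3 : ∑ j : Fin d, c (τ j) * (g j - v j) ≤ 0 := by
      rw [← Finset.sum_congr rfl (fun j _ => (h2 j)), h1]
      exact habel
    have h4 : ∑ j : Fin d, c (τ j) * (g j - v j) =
        ∑ j : Fin d, c (τ j) * g j - ∑ j : Fin d, c (τ j) * v j := by
      rw [← Finset.sum_sub_distrib]
      apply Finset.sum_congr rfl
      intro j _; ring
    linarith [h4 ▸ h3]
  -- rearrangement
  have hmono : Monovary (c ∘ τ) g := by
    intro i j hgij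
    have hji : j < i := by
      by_contra hcon
      push_neg at hcon
      exact absurd (hρ hcon) (not_le.mpr hgij)
    exact hτ hji.le
  have hrearr : ∑ i, c i * x i ≤ ∑ j : Fin d, c (τ j) * g j := by
    have h1 : ∑ i, c i * x i = ∑ j, c (τ j) * x (τ j) :=
      (Equiv.sum_comp τ (fun i => c i * x i)).symm
    have h2 : ∀ j, x (τ j) = g ((τ.trans ρ.symm) j) := by
      intro j
      simp [hg, Function.comp, Equiv.trans]
    rw [h1]
    calc ∑ j, c (τ j) * x (τ j) = ∑ j, (c ∘ τ) j * g ((τ.trans ρ.symm) j) := by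
          apply Finset.sum_congr rfl; intro j _; rw [h2 j]; rfl
      _ ≤ ∑ j, (c ∘ τ) j * g j := hmono.sum_mul_comp_perm_le_sum_mul
      _ = ∑ j : Fin d, c (τ j) * g j := rfl
  -- the vertex v ∘ τ.symm
  have hvert : f (v ∘ τ.symm) = ∑ j : Fin d, c (τ j) * v j := by
    rw [hf_eq]
    exact (Equiv.sum_comp τ (fun i => c i * (v ∘ τ.symm) i)).symm.trans
      (by apply Finset.sum_congr rfl; intro j _; simp)
  have hlt : f (v ∘ τ.symm) < u := hfu _ (subset_convexHull ℝ _ ⟨τ.symm, rfl⟩)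
  have hfx : f x = ∑ i, c i * x i := hf_eq x
  linarith [hrearr.trans hkey]

end SpectralAux

/-- `Σ(w, a) = Σ(w) ∩ (w·P_a + (1−w)·P_HF)`: the spectral set cut out
by the bounds `Ω(w,k,N,a)` equals the intersection of `Σ(w)` with the Minkowski sum
of the scaled permutohedra of `a` and the Hartree–Fock vector. -/
theorem spectral_set_eq_inter_minkowski
    (d N : ℕ) (hN : 1 ≤ N) (hd : N + 1 ≤ d) (w : ℝ) (hw : w ∈ Set.Icc (0 : ℝ) 1)
    (a : Fin d → ℝ) (ha : Antitone a)
    (ha01 : ∀ i, a i ∈ Set.Icc (0 : ℝ) 1) (hasum : ∑ i, a i = (N : ℝ))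
    (vHF : Fin d → ℝ) (hvHF : ∀ i : Fin d, vHF i = if (i : ℕ) < N then 1 else 0) :
    { lam : Fin d → ℝ | (∑ i, lam i) = (N : ℝ) ∧
        ∀ k : ℕ, 1 ≤ k → k ≤ d - 1 → sumKLargest k lam ≤ Omega d N k w a } =
      { lam : Fin d → ℝ | (∑ i, lam i) = (N : ℝ) ∧
          (∀ k : ℕ, 1 ≤ k → k ≤ N - 1 → sumKLargest k lam ≤ (k : ℝ)) ∧
          sumKLargest N lam ≤ (N : ℝ) - 1 + w ∧
          (∀ k : ℕ, N + 1 ≤ k → k ≤ d - 1 → sumKLargest k lam ≤ (N : ℝ)) } ∩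
        (w • permutohedron a + (1 - w) • permutohedron vHF) := by
  obtain ⟨hw0, hw1⟩ := hw
  have hd1 : 1 ≤ d := by omega
  -- antitonicity of vHF
  have hv_anti : Antitone vHF := by
    intro i j hij
    have hij' : (i : ℕ) ≤ (j : ℕ) := hij
    rw [hvHF, hvHF]
    by_cases h1 : (j : ℕ) < N
    · rw [if_pos h1, if_pos (by omega : (i : ℕ) < N)]
    · rw [if_neg h1]
      split_ifs <;> norm_num
  -- the interpolated vector
  set b : Fin d → ℝ := fun i => w * a i + (1 - w) * vHF i with hb
  have hb_anti : Antitone b := by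
    intro i j hij
    exact add_le_add (mul_le_mul_of_nonneg_left (ha hij) hw0)
      (mul_le_mul_of_nonneg_left (hv_anti hij) (by linarith))
  have hpSb : ∀ k : ℕ, partialSum k b =
      w * partialSum k a + (1 - w) * partialSum k vHF := by
    intro k
    unfold partialSum
    rw [Finset.mul_sum, Finset.mul_sum, ← Finset.sum_add_distrib]
  have hvHFpS : ∀ k : ℕ, k ≤ d → partialSum k vHF = min (k : ℝ) (N : ℝ) := by
    intro k hk
    rw [SpectralAux.partialSum_eq hk]
    have h1 : ∀ j : Fin k, vHF (Fin.castLE hk j) = if (j : ℕ) < N then (1:ℝ) else 0 := by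
      intro j; rw [hvHF]; rfl
    rw [Finset.sum_congr rfl (fun j _ => h1 j),
      Fin.sum_univ_eq_sum_range (fun n => if n < N then (1:ℝ) else 0) k]
    rw [Finset.sum_ite, Finset.sum_const, Finset.sum_const]
    have h2 : (Finset.range k).filter (fun n => n < N) = Finset.range (min k N) := by
      ext n; simp only [Finset.mem_filter, Finset.mem_range, Finset.mem_range]; omega
    rw [h2]
    simp [Nat.cast_min]
  have hpSa_le_k : ∀ k : ℕ, k ≤ d → partialSum k a ≤ (k : ℝ) := by
    intro k hk
    rw [SpectralAux.partialSum_eq hk]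
    calc ∑ j : Fin k, a (Fin.castLE hk j) ≤ ∑ _j : Fin k, (1 : ℝ) :=
          Finset.sum_le_sum (fun j _ => (ha01 _).2)
      _ = (k : ℝ) := by simp
  have hpSa_le_N : ∀ k : ℕ, partialSum k a ≤ (N : ℝ) := by
    intro k
    unfold partialSum
    calc ∑ i ∈ Finset.univ.filter (fun i : Fin d => (i : ℕ) < k), a i ≤ ∑ i, a i :=
          Finset.sum_le_sum_of_subset_of_nonneg (Finset.subset_univ _)
            (fun i _ _ => (ha01 i).1)
      _ = (N : ℝ) := hasum
  have hsum_vHF : ∑ i, vHF i = (N : ℝ) := by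
    have h := hvHFpS d le_rfl
    rw [SpectralAux.partialSum_self] at h
    rw [h]
    exact min_eq_right (by exact_mod_cast (by omega : N ≤ d))
  have hsum_b : ∑ i, b i = (N : ℝ) := by
    have := hpSb d
    rw [SpectralAux.partialSum_self, SpectralAux.partialSum_self,
      SpectralAux.partialSum_self] at this
    rw [this, hasum, hsum_vHF]; ring
  ext lam
  simp only [Set.mem_setOf_eq, Set.mem_inter_iff]
  constructor
  · rintro ⟨hsum, hΩ⟩
    have hNd1 : N ≤ d - 1 := by omega
    refine ⟨⟨hsum, ?_, ?_, ?_⟩, ?_⟩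
    · -- k ≤ N - 1
      intro k hk1 hk2
      have hkN : k < N := by omega
      have hkd : k ≤ d := by omega
      have h := hΩ k hk1 (by omega)
      rw [Omega, if_neg (by omega)] at h
      have hmin : min (k : ℝ) (N : ℝ) = (k : ℝ) :=
        min_eq_left (by exact_mod_cast hkN.le)
      rw [hmin] at h
      have hp := hpSa_le_k k hkd
      nlinarith [mul_le_mul_of_nonneg_left hp hw0]
    · -- k = N
      have h := hΩ N hN hNd1
      rw [Omega, if_pos rfl] at h
      exact h.trans (min_le_left _ _)
    · -- N + 1 ≤ k
      intro k hk1 hk2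
      have h := hΩ k (by omega) hk2
      rw [Omega, if_neg (by omega)] at h
      have hmin : min (k : ℝ) (N : ℝ) = (N : ℝ) :=
        min_eq_right (by exact_mod_cast (by omega : N ≤ k))
      rw [hmin] at h
      have hp := hpSa_le_N k
      nlinarith [mul_le_mul_of_nonneg_left hp hw0]
    · -- Minkowski membership
      have hmaj : lam ∈ permutohedron b := by
        apply SpectralAux.mem_permutohedron_of_maj hd1 hb_anti lam
          (by rw [hsum, hsum_b])
        intro k hk1 hk2
        have hkd : k ≤ d := by omega
        rw [hpSb k, hvHFpS k hkd]
        have h := hΩ k hk1 hk2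
        by_cases hkN : k = N
        · subst hkN
          rw [Omega, if_pos rfl] at h
          rw [min_self]
          exact h.trans (min_le_right _ _)
        · rw [Omega, if_neg hkN] at h
          exact h
      have hsub : permutohedron b ⊆
          w • permutohedron a + (1 - w) • permutohedron vHF := by
        apply convexHull_min
        · rintro y ⟨σ, rfl⟩
          have hdecomp : b ∘ σ = w • (a ∘ σ) + (1 - w) • (vHF ∘ σ) := by
            funext i
            simp [hb]
          rw [hdecomp]
          exact Set.add_mem_add
            (Set.smul_mem_smul_set (subset_convexHull ℝ _ ⟨σ, rfl⟩))
            (Set.smul_mem_smul_set (subset_convexHull ℝ _ ⟨σ, rfl⟩))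
        · exact ((convex_convexHull ℝ _).smul w).add
            ((convex_convexHull ℝ _).smul (1 - w))
      exact hsub hmaj
  · rintro ⟨⟨hsum, hSg1, hSg2, hSg3⟩, hmem⟩
    rw [Set.mem_add] at hmem
    obtain ⟨u, hu, v', hv', huv⟩ := hmem
    obtain ⟨p, hp, rfl⟩ := Set.mem_smul_set.mp hu
    obtain ⟨q, hq, rfl⟩ := Set.mem_smul_set.mp hv'
    have hpB := SpectralAux.mem_perm_bounds ha hp
    have hqB := SpectralAux.mem_perm_bounds hv_anti hq
    refine ⟨hsum, ?_⟩
    intro k hk1 hk2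
    have hkd : k ≤ d := by omega
    have key : sumKLargest k lam ≤
        w * partialSum k a + (1 - w) * partialSum k vHF := by
      rw [← huv]
      apply SpectralAux.sumKLargest_le hkd
      intro s hs
      have h1 : ∑ i ∈ s, (w • p + (1 - w) • q) i =
          w * ∑ i ∈ s, p i + (1 - w) * ∑ i ∈ s, q i := by
        simp [Finset.sum_add_distrib, Finset.mul_sum]
      rw [h1]
      have h2 : ∑ i ∈ s, p i ≤ partialSum k a :=
        (SpectralAux.le_sumKLargest p hs).trans (hpB.2 k hkd)
      have h3 : ∑ i ∈ s, q i ≤ partialSum k vHF :=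
        (SpectralAux.le_sumKLargest q hs).trans (hqB.2 k hkd)
      have hw2 : (0:ℝ) ≤ 1 - w := by linarith
      nlinarith [mul_le_mul_of_nonneg_left h2 hw0, mul_le_mul_of_nonneg_left h3 hw2]
    by_cases hkN : k = N
    · subst hkN
      rw [Omega, if_pos rfl]
      refine le_min hSg2 ?_
      rw [hvHFpS _ hkd, min_self] at key
      exact key
    · rw [Omega, if_neg hkN]
      rw [hvHFpS k hkd] at key
      exact key
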